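/- Let G ~ G(p) be an inhomogeneous random graph on [n] with p_max ≤ 1/2, and let k be a positive integer. Then Var(|Z_k|) ≤ E[|Z_k|] + 3 n² p_max. -/

import Mathlib

open MeasureTheory ProbabilityTheory Filter Real
open scoped ENNReal Classical

noncomputable section

namespace GraphMatching

variable {n : ℕ}

/-- The ordered representative of the unordered pair `{i, j}`. -/
def eidx (i j : Fin n) : Fin n × Fin n := if i ≤ j then (i, j) else (j, i)

/-- A space of edge indicators, one for each (ordered) pair of vertices;
only the representatives with `i ≤ j` are ever read off. -/
abbrev EdgeSpace (n : ℕ) := Fin n × Fin n → Bool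

/-- Bernoulli measure on `Bool` with success probability `p` (clamped to `[0,1]`). -/
def bern (p : ℝ) : Measure Bool :=
  (PMF.bernoulli (min (Real.toNNReal p) 1) (min_le_right _ _)).toMeasure

/-- The law of an inhomogeneous random graph `G(p)`, encoded by independent edge
indicators with `P((i,j) present) = p i j` for the representative pairs. -/
def edgeMeasure (n : ℕ) (p : Fin n → Fin n → ℝ) : Measure (EdgeSpace n) :=
  Measure.pi fun e => bern (p e.1 e.2)

/-- The adjacency relation of the graph encoded by `g`. -/
def adjOf (g : EdgeSpace n) (i j : Fin n) : Prop := i ≠ j ∧ g (eidx i j) = true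

/-- The degree of vertex `i` in the graph encoded by `g`. -/
def deg (g : EdgeSpace n) (i : Fin n) : ℕ :=
  (Finset.univ.filter fun j => adjOf g i j).card

/-- `|Z_k|`: the number of vertices of degree at most `k`. -/
def Zcard (k : ℕ) (g : EdgeSpace n) : ℕ :=
  (Finset.univ.filter fun i => deg g i ≤ k).card

end GraphMatching

end

noncomputable section
namespace GraphMatching
variable {n : ℕ}

-- helpers
lemma eidx_cases {a b c d : Fin n} (h : eidx a b = eidx c d) :
    (a = c ∧ b = d) ∨ (a = d ∧ b = c) := by
  unfold eidx at h
  split_ifs at h <;> simp_all [Prod.ext_iff]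

instance bern_prob (q : ℝ) : IsProbabilityMeasure (bern q) := by
  unfold bern; infer_instance

lemma bern_true {q : ℝ} (h1 : q ≤ 1) : bern q {true} = ENNReal.ofReal q := by
  unfold bern
  rw [PMF.toMeasure_apply_singleton _ _ (measurableSet_singleton _)]
  rw [PMF.bernoulli_apply]; simp only [cond_true]
  rw [min_eq_left (by simpa using Real.toNNReal_le_toNNReal h1)]; rfl

instance edge_prob (p : Fin n → Fin n → ℝ) : IsProbabilityMeasure (edgeMeasure n p) := by
  unfold edgeMeasure; infer_instance

lemma integral_edge_indicator (p : Fin n → Fin n → ℝ) (hp0 : ∀ i j, 0 ≤ p i j)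
    (hp1 : ∀ i j, p i j ≤ 1) (e0 : Fin n × Fin n) :
    ∫ g, (if g e0 = true then (1:ℝ) else 0) ∂edgeMeasure n p = p e0.1 e0.2 := by
  have hs : {g : EdgeSpace n | g e0 = true}
      = Set.pi Set.univ (fun e => if e = e0 then {true} else Set.univ) := by
    ext g
    simp only [Set.mem_setOf_eq, Set.mem_pi, Set.mem_univ, forall_true_left]
    constructor
    · intro h e; split_ifs with he <;> simp [he, h]
    · intro h
      have := h e0; simpa using this
  have hmeas : (edgeMeasure n p) {g : EdgeSpace n | g e0 = true} = ENNReal.ofReal (p e0.1 e0.2) := by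
    rw [hs]
    unfold edgeMeasure
    rw [Measure.pi_pi]
    rw [Finset.prod_eq_single e0]
    · simp [bern_true (hp1 e0.1 e0.2)]
    · intro e _ he; rw [if_neg he]; exact measure_univ
    · simp
  have : (fun g : EdgeSpace n => if g e0 = true then (1:ℝ) else 0)
      = Set.indicator {g : EdgeSpace n | g e0 = true} (fun _ => (1:ℝ)) := by
    ext g; simp [Set.indicator_apply, Set.mem_setOf_eq]
  rw [this, integral_indicator_const _ MeasurableSet.of_discrete, measureReal_def, hmeas]
  simp [ENNReal.toReal_ofReal (hp0 _ _)]


lemma integral_mul_of_depends (p : Fin n → Fin n → ℝ) (A : Finset (Fin n × Fin n))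
    (f h : EdgeSpace n → ℝ)
    (hf : ∀ g g' : EdgeSpace n, (∀ e ∈ A, g e = g' e) → f g = f g')
    (hh : ∀ g g' : EdgeSpace n, (∀ e ∉ A, g e = g' e) → h g = h g') :
    ∫ g, f g * h g ∂edgeMeasure n p
      = (∫ g, f g ∂edgeMeasure n p) * ∫ g, h g ∂edgeMeasure n p := by
  classical
  set Q : Fin n × Fin n → Prop := fun e => e ∈ A with hQ
  set ψ := MeasurableEquiv.piEquivPiSubtypeProd (fun _ : Fin n × Fin n => Bool) Q with hψdef
  have hex : ∃ (ν₁ : Measure (∀ _ : Subtype Q, Bool))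
      (ν₂ : Measure (∀ _ : {e : Fin n × Fin n // ¬ Q e}, Bool)),
      IsProbabilityMeasure ν₁ ∧ IsProbabilityMeasure ν₂ ∧
      MeasurePreserving ψ (edgeMeasure n p) (ν₁.prod ν₂) := by
    refine ⟨_, _, ?_, ?_,
      measurePreserving_piEquivPiSubtypeProd (fun e : Fin n × Fin n => bern (p e.1 e.2)) Q⟩
    · infer_instance
    · infer_instance
  obtain ⟨ν₁, ν₂, hprob1, hprob2, hψ⟩ := hex
  haveI := hprob1; haveI := hprob2
  have hsymm : ∀ (x : ∀ e : Subtype Q, Bool) (y : ∀ e : {e : Fin n × Fin n // ¬ Q e}, Bool)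
      (e : Fin n × Fin n),
      ψ.symm (x, y) e = if he : Q e then x ⟨e, he⟩ else y ⟨e, he⟩ := fun x y e => rfl
  set F : (∀ e : Subtype Q, Bool) → ℝ := fun x => f (ψ.symm (x, fun _ => false)) with hFdef
  set H : (∀ e : {e : Fin n × Fin n // ¬ Q e}, Bool) → ℝ :=
    fun y => h (ψ.symm ((fun _ => false), y)) with hHdef
  have hF : ∀ z, f (ψ.symm z) = F z.1 := by
    rintro ⟨x, y⟩
    refine hf _ _ fun e he => ?_
    rw [hsymm, hsymm, dif_pos he, dif_pos he]
  have hH : ∀ z : (∀ e : Subtype Q, Bool) × (∀ e : {e : Fin n × Fin n // ¬ Q e}, Bool),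
      h (ψ.symm z) = H z.2 := by
    rintro ⟨x, y⟩
    refine hh _ _ fun e he => ?_
    rw [hsymm, hsymm, dif_neg he, dif_neg he]
  have key : ∀ G : EdgeSpace n → ℝ, ∫ g, G g ∂edgeMeasure n p
      = ∫ z, G (ψ.symm z) ∂(ν₁.prod ν₂) := by
    intro G
    have := MeasurePreserving.integral_comp' (f := ψ) hψ (fun z => G (ψ.symm z))
    simpa using this
  have h1 : ∫ z, F z.1 ∂(ν₁.prod ν₂) = ∫ x, F x ∂ν₁ := by
    simpa using integral_prod_mul (μ := ν₁) (ν := ν₂) F (fun _ => (1:ℝ))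
  have h2 : ∫ z, H z.2 ∂(ν₁.prod ν₂) = ∫ y, H y ∂ν₂ := by
    simpa using integral_prod_mul (μ := ν₁) (ν := ν₂) (fun _ => (1:ℝ)) H
  calc ∫ g, f g * h g ∂edgeMeasure n p
      = ∫ z, F z.1 * H z.2 ∂(ν₁.prod ν₂) := by
        rw [key (fun g => f g * h g)]
        refine integral_congr_ae (Filter.Eventually.of_forall fun z => ?_)
        dsimp only
        rw [hF z, hH z]
    _ = (∫ x, F x ∂ν₁) * ∫ y, H y ∂ν₂ := integral_prod_mul F H
    _ = (∫ g, f g ∂edgeMeasure n p) * ∫ g, h g ∂edgeMeasure n p := by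
        rw [key f, key h, ← h1, ← h2]
        congr 1
        · exact integral_congr_ae (Filter.Eventually.of_forall fun z => (hF z).symm)
        · exact integral_congr_ae (Filter.Eventually.of_forall fun z => (hH z).symm)


lemma eidx_comm (i j : Fin n) : eidx i j = eidx j i := by
  unfold eidx
  split_ifs with h1 h2 h2
  · obtain rfl := le_antisymm h1 h2; rfl
  · rfl
  · rfl
  · exact absurd (le_of_not_ge h1) h2

lemma deg_update (g : EdgeSpace n) (i j : Fin n) (hij : i ≠ j) :
    deg (Function.update g (eidx i j) false) i
      = (Finset.univ.filter fun l => i ≠ l ∧ l ≠ j ∧ g (eidx i l) = true).card := by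
  unfold deg
  congr 1
  apply Finset.filter_congr
  intro l _
  unfold adjOf
  by_cases hl : l = j
  · subst hl
    simp [Function.update_apply]
  · have hne : eidx i l ≠ eidx i j := by
      intro h
      rcases eidx_cases h with ⟨-, h2⟩ | ⟨h1, -⟩
      · exact hl h2
      · exact hij h1
    rw [Function.update_apply, if_neg hne]
    constructor
    · rintro ⟨h1, h2⟩; exact ⟨h1, hl, h2⟩
    · rintro ⟨h1, -, h2⟩; exact ⟨h1, h2⟩

lemma cov_bound (p : Fin n → Fin n → ℝ) (hp0 : ∀ i j, 0 ≤ p i j) (hp1 : ∀ i j, p i j ≤ 1)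
    (hsym : ∀ i j, p i j = p j i) (k : ℕ) (i j : Fin n) (hij : i ≠ j) :
    ∫ g, ((if deg g i ≤ k then (1:ℝ) else 0)
        - ∫ g', (if deg g' i ≤ k then (1:ℝ) else 0) ∂edgeMeasure n p)
      * ((if deg g j ≤ k then (1:ℝ) else 0)
        - ∫ g', (if deg g' j ≤ k then (1:ℝ) else 0) ∂edgeMeasure n p)
      ∂edgeMeasure n p ≤ 2 * p i j := by
  classical
  set μ := edgeMeasure n p with hμ
  haveI : IsProbabilityMeasure μ := edge_prob p
  have hInt : ∀ f : EdgeSpace n → ℝ, Integrable f μ := fun f => .of_finite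
  set e0 := eidx i j with he0
  set a : EdgeSpace n → ℝ := fun g => if deg g i ≤ k then 1 else 0 with hadef
  set c : EdgeSpace n → ℝ := fun g => if deg g j ≤ k then 1 else 0 with hcdef
  set b : EdgeSpace n → ℝ :=
    fun g => if deg (Function.update g e0 false) i ≤ k then 1 else 0 with hbdef
  set d : EdgeSpace n → ℝ :=
    fun g => if deg (Function.update g e0 false) j ≤ k then 1 else 0 with hddef
  set χ : EdgeSpace n → ℝ := fun g => if g e0 = true then 1 else 0 with hχdef
  set MA := ∫ g, a g ∂μ with hMA
  set MB := ∫ g, b g ∂μ with hMB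
  set MC := ∫ g, c g ∂μ with hMC
  set MD := ∫ g, d g ∂μ with hMD
  -- pointwise 0-1 bounds
  have ha01 : ∀ g, 0 ≤ a g ∧ a g ≤ 1 := fun g => by
    simp only [hadef]; split <;> norm_num
  have hb01 : ∀ g, 0 ≤ b g ∧ b g ≤ 1 := fun g => by
    simp only [hbdef]; split <;> norm_num
  have hc01 : ∀ g, 0 ≤ c g ∧ c g ≤ 1 := fun g => by
    simp only [hcdef]; split <;> norm_num
  have hd01 : ∀ g, 0 ≤ d g ∧ d g ≤ 1 := fun g => by
    simp only [hddef]; split <;> norm_num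
  have hone : ∫ (_ : EdgeSpace n), (1:ℝ) ∂μ = 1 := by simp
  have hM01 : ∀ f : EdgeSpace n → ℝ, (∀ g, 0 ≤ f g ∧ f g ≤ 1) →
      0 ≤ ∫ g, f g ∂μ ∧ ∫ g, f g ∂μ ≤ 1 := by
    intro f hf
    constructor
    · exact integral_nonneg fun g => (hf g).1
    · rw [← hone]; exact integral_mono (hInt _) (hInt _) fun g => (hf g).2
  have hMB01 := hM01 b hb01
  rw [← hMB] at hMB01
  have hMC01 := hM01 c hc01
  rw [← hMC] at hMC01
  have hMD01 := hM01 d hd01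
  rw [← hMD] at hMD01
  -- representation of b and d via local degree counts
  have hbrep : ∀ g : EdgeSpace n,
      b g = if (Finset.univ.filter fun l => i ≠ l ∧ l ≠ j ∧ g (eidx i l) = true).card ≤ k
        then (1:ℝ) else 0 := by
    intro g; simp only [hbdef]; rw [he0, deg_update g i j hij]
  have hdrep : ∀ g : EdgeSpace n,
      d g = if (Finset.univ.filter fun l => j ≠ l ∧ l ≠ i ∧ g (eidx j l) = true).card ≤ k
        then (1:ℝ) else 0 := by
    intro g; simp only [hddef]; rw [he0, eidx_comm, deg_update g j i (Ne.symm hij)]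
  -- the coordinate set that b depends on
  set S : Finset (Fin n × Fin n) :=
    (Finset.univ.filter fun l => l ≠ i ∧ l ≠ j).image (fun l => eidx i l) with hS
  have hb_dep : ∀ g g' : EdgeSpace n, (∀ e ∈ S, g e = g' e) → b g = b g' := by
    intro g g' hgg
    rw [hbrep, hbrep]
    have : (Finset.univ.filter fun l => i ≠ l ∧ l ≠ j ∧ g (eidx i l) = true)
        = Finset.univ.filter fun l => i ≠ l ∧ l ≠ j ∧ g' (eidx i l) = true := by
      apply Finset.filter_congr
      intro l _
      by_cases h1 : i ≠ l
      · by_cases h2 : l ≠ j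
        · have hmem : eidx i l ∈ S := Finset.mem_image.mpr
            ⟨l, Finset.mem_filter.mpr ⟨Finset.mem_univ _, Ne.symm h1, h2⟩, rfl⟩
          rw [hgg _ hmem]
        · simp [h2]
      · simp [h1]
    rw [this]
  have hd_dep : ∀ g g' : EdgeSpace n, (∀ e ∉ S, g e = g' e) → d g = d g' := by
    intro g g' hgg
    rw [hdrep, hdrep]
    have hnot : ∀ l : Fin n, eidx j l ∉ S := by
      intro l hmem
      obtain ⟨mm, hm, hEq⟩ := Finset.mem_image.mp hmem
      obtain ⟨-, hm1, hm2⟩ := Finset.mem_filter.mp hm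
      rcases eidx_cases hEq with ⟨e1, -⟩ | ⟨-, e2⟩
      · exact hij e1
      · exact hm2 e2
    have : (Finset.univ.filter fun l => j ≠ l ∧ l ≠ i ∧ g (eidx j l) = true)
        = Finset.univ.filter fun l => j ≠ l ∧ l ≠ i ∧ g' (eidx j l) = true := by
      apply Finset.filter_congr
      intro l _
      rw [hgg _ (hnot l)]
    rw [this]
  have hbd : ∫ g, b g * d g ∂μ = MB * MD := by
    rw [hμ]; exact integral_mul_of_depends p S b d hb_dep hd_dep
  -- zero terms
  have hT3 : ∫ g, (b g - MB) * (d g - MD) ∂μ = 0 := by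
    have : ∀ g, (b g - MB) * (d g - MD) = b g * d g - MB * d g - MD * b g + MB * MD :=
      fun g => by ring
    rw [integral_congr_ae (Filter.Eventually.of_forall this)]
    rw [integral_add (hInt _) (hInt _), integral_sub (hInt _) (hInt _),
      integral_sub (hInt _) (hInt _), hbd, integral_const_mul, integral_const_mul,
      integral_const, ← hMB, ← hMD]
    simp only [measure_univ, ENNReal.toReal_one, probReal_univ, smul_eq_mul, one_mul]
    ring
  have hT4 : ∫ g, (c g - MC) ∂μ = 0 := by
    rw [integral_sub (hInt _) (hInt _), integral_const, ← hMC]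
    simp
  have hT5 : ∫ g, (b g - MB) ∂μ = 0 := by
    rw [integral_sub (hInt _) (hInt _), integral_const, ← hMB]
    simp
  -- indicator of the shared edge
  have hχint : ∫ g, χ g ∂μ = p i j := by
    simp only [hχdef]
    rw [hμ, integral_edge_indicator p hp0 hp1 e0]
    rw [he0]
    unfold eidx
    split_ifs
    · rfl
    · exact (hsym j i)
  -- pointwise bounds
  have hupd : ∀ g : EdgeSpace n, g e0 ≠ true → Function.update g e0 false = g := by
    intro g hg
    have : g e0 = false := Bool.not_eq_true _ |>.mp hg
    rw [← this]
    exact Function.update_eq_self e0 g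
  have hpt1 : ∀ g, (a g - b g) * (c g - MC) ≤ χ g := by
    intro g
    by_cases hg : g e0 = true
    · have h1 : |a g - b g| ≤ 1 := by
        rw [abs_le]; constructor <;>
          [linarith [(ha01 g).1, (hb01 g).2]; linarith [(ha01 g).2, (hb01 g).1]]
      have h2 : |c g - MC| ≤ 1 := by
        rw [abs_le]; constructor <;>
          [linarith [(hc01 g).1, hMC01.2]; linarith [(hc01 g).2, hMC01.1]]
      calc (a g - b g) * (c g - MC) ≤ |(a g - b g) * (c g - MC)| := le_abs_self _
        _ = |a g - b g| * |c g - MC| := abs_mul _ _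
        _ ≤ 1 * 1 := mul_le_mul h1 h2 (abs_nonneg _) zero_le_one
        _ = χ g := by simp only [hχdef]; simp [hg]
    · have hb_eq : b g = a g := by simp only [hbdef, hadef]; rw [hupd g hg]
      have hχ0 : χ g = 0 := by simp only [hχdef]; simp [hg]
      rw [hb_eq, hχ0, sub_self, zero_mul]
  have hpt2 : ∀ g, (b g - MB) * (c g - d g) ≤ χ g := by
    intro g
    by_cases hg : g e0 = true
    · have h1 : |b g - MB| ≤ 1 := by
        rw [abs_le]; constructor <;>
          [linarith [(hb01 g).1, hMB01.2]; linarith [(hb01 g).2, hMB01.1]]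
      have h2 : |c g - d g| ≤ 1 := by
        rw [abs_le]; constructor <;>
          [linarith [(hc01 g).1, (hd01 g).2]; linarith [(hc01 g).2, (hd01 g).1]]
      calc (b g - MB) * (c g - d g) ≤ |(b g - MB) * (c g - d g)| := le_abs_self _
        _ = |b g - MB| * |c g - d g| := abs_mul _ _
        _ ≤ 1 * 1 := mul_le_mul h1 h2 (abs_nonneg _) zero_le_one
        _ = χ g := by simp only [hχdef]; simp [hg]
    · have hd_eq : d g = c g := by simp only [hddef, hcdef]; rw [hupd g hg]
      have hχ0 : χ g = 0 := by simp only [hχdef]; simp [hg]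
      rw [hd_eq, hχ0, sub_self, mul_zero]
  have hT1 : ∫ g, (a g - b g) * (c g - MC) ∂μ ≤ p i j := by
    rw [← hχint]; exact integral_mono (hInt _) (hInt _) hpt1
  have hT2 : ∫ g, (b g - MB) * (c g - d g) ∂μ ≤ p i j := by
    rw [← hχint]; exact integral_mono (hInt _) (hInt _) hpt2
  -- splitting
  have key : ∫ g, (a g - MA) * (c g - MC) ∂μ
      = (∫ g, (a g - b g) * (c g - MC) ∂μ) + (∫ g, (b g - MB) * (c g - d g) ∂μ)
        + (∫ g, (b g - MB) * (d g - MD) ∂μ) + (MB - MA) * (∫ g, (c g - MC) ∂μ)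
        + (MD - MC) * (∫ g, (b g - MB) ∂μ) := by
    rw [← integral_const_mul, ← integral_const_mul, ← integral_add (hInt _) (hInt _),
      ← integral_add (hInt _) (hInt _), ← integral_add (hInt _) (hInt _),
      ← integral_add (hInt _) (hInt _)]
    exact integral_congr_ae (Filter.Eventually.of_forall fun g => by ring)
  calc ∫ g, (a g - MA) * (c g - MC) ∂μ
      = (∫ g, (a g - b g) * (c g - MC) ∂μ) + (∫ g, (b g - MB) * (c g - d g) ∂μ)
        + 0 + (MB - MA) * 0 + (MD - MC) * 0 := by rw [key, hT3, hT4, hT5]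
    _ ≤ p i j + p i j + 0 + (MB - MA) * 0 + (MD - MC) * 0 := by linarith
    _ = 2 * p i j := by ring


lemma diag_bound (p : Fin n → Fin n → ℝ) (k : ℕ) (i : Fin n) :
    ∫ g, ((if deg g i ≤ k then (1:ℝ) else 0)
        - ∫ g', (if deg g' i ≤ k then (1:ℝ) else 0) ∂edgeMeasure n p)
      * ((if deg g i ≤ k then (1:ℝ) else 0)
        - ∫ g', (if deg g' i ≤ k then (1:ℝ) else 0) ∂edgeMeasure n p)
      ∂edgeMeasure n p ≤ ∫ g, (if deg g i ≤ k then (1:ℝ) else 0) ∂edgeMeasure n p := by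
  classical
  set μ := edgeMeasure n p with hμ
  haveI : IsProbabilityMeasure μ := edge_prob p
  have hInt : ∀ f : EdgeSpace n → ℝ, Integrable f μ := fun f => .of_finite
  set a : EdgeSpace n → ℝ := fun g => if deg g i ≤ k then 1 else 0 with hadef
  set MA := ∫ g, a g ∂μ with hMA
  have hsq : ∀ g, (a g - MA) * (a g - MA) = a g - 2 * MA * a g + MA * MA := by
    intro g
    have h : a g * a g = a g := by simp only [hadef]; split <;> norm_num
    linear_combination h
  rw [integral_congr_ae (Filter.Eventually.of_forall hsq)]
  rw [integral_add (hInt _) (hInt _), integral_sub (hInt _) (hInt _), integral_const_mul,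
    integral_const, ← hMA]
  simp only [measure_univ, ENNReal.toReal_one, probReal_univ, smul_eq_mul, one_mul]
  nlinarith [sq_nonneg MA]


end GraphMatching
end

open GraphMatching in
/-- variance bound for `|Z_k|`:
if `p_max ≤ 1/2` then `Var(|Z_k|) ≤ E[|Z_k|] + 3 n² p_max`. -/
theorem Zk_variance_bound
    (n : ℕ) (p : Fin n → Fin n → ℝ)
    (hsym : ∀ i j, p i j = p j i)
    (hp0 : ∀ i j, 0 ≤ p i j) (hp1 : ∀ i j, p i j ≤ 1)
    (hdiag : ∀ i, p i i = 0)
    (hpmax : (⨆ e : Fin n × Fin n, p e.1 e.2) ≤ 1 / 2)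
    (k : ℕ) (hk : 0 < k) :
    (∫ g, ((Zcard k g : ℝ) - ∫ g', (Zcard k g' : ℝ) ∂edgeMeasure n p) ^ 2
        ∂edgeMeasure n p) ≤
      (∫ g, (Zcard k g : ℝ) ∂edgeMeasure n p) +
        3 * (n : ℝ) ^ 2 * ⨆ e : Fin n × Fin n, p e.1 e.2 := by
  classical
  rcases Nat.eq_zero_or_pos n with hn | hn
  · subst hn
    haveI : IsProbabilityMeasure (edgeMeasure 0 p) := edge_prob p
    have hz : ∀ g : EdgeSpace 0, (Zcard k g : ℝ) = 0 := by
      intro g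
      simp [Zcard]
    have h1 : ∫ g, (Zcard k g : ℝ) ∂edgeMeasure 0 p = 0 := by
      rw [integral_congr_ae (Filter.Eventually.of_forall hz)]; simp
    rw [h1]
    have h2 : ∫ g, ((Zcard k g : ℝ) - 0) ^ 2 ∂edgeMeasure 0 p = 0 := by
      rw [integral_congr_ae (Filter.Eventually.of_forall
        (fun g => by rw [hz g]; norm_num : ∀ g : EdgeSpace 0, ((Zcard k g : ℝ) - 0) ^ 2 = 0))]
      simp
    rw [h2]
    norm_num
  · set μ := edgeMeasure n p with hμ
    haveI : IsProbabilityMeasure μ := edge_prob p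
    have hInt : ∀ f : EdgeSpace n → ℝ, Integrable f μ := fun f => .of_finite
    set X : Fin n → EdgeSpace n → ℝ := fun i g => if deg g i ≤ k then 1 else 0 with hX
    set m : Fin n → ℝ := fun i => ∫ g, X i g ∂μ with hm
    set pm := ⨆ e : Fin n × Fin n, p e.1 e.2 with hpm
    have hple : ∀ e : Fin n × Fin n, p e.1 e.2 ≤ pm :=
      fun e => le_ciSup (Set.finite_range (fun e : Fin n × Fin n => p e.1 e.2)).bddAbove e
    have hpm0 : 0 ≤ pm :=
      le_trans (hp0 ⟨0, hn⟩ ⟨0, hn⟩) (hple ((⟨0, hn⟩ : Fin n), (⟨0, hn⟩ : Fin n)))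
    have hZ : ∀ g : EdgeSpace n, (Zcard k g : ℝ) = ∑ i, X i g := by
      intro g
      rw [Zcard, Finset.card_filter]
      push_cast
      simp only [hX]
    have hEZ : ∫ g, (Zcard k g : ℝ) ∂μ = ∑ i, m i := by
      rw [integral_congr_ae (Filter.Eventually.of_forall hZ),
        integral_finset_sum _ (fun i _ => hInt _)]
    have hterm : ∀ i j : Fin n, ∫ g, (X i g - m i) * (X j g - m j) ∂μ
        ≤ if i = j then m i else 2 * pm := by
      intro i j
      split_ifs with h
      · subst h
        exact diag_bound p k i
      · calc ∫ g, (X i g - m i) * (X j g - m j) ∂μ ≤ 2 * p i j :=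
            cov_bound p hp0 hp1 hsym k i j h
          _ ≤ 2 * pm := by have := hple (i, j); linarith
    have hpt : ∀ g : EdgeSpace n, ((Zcard k g : ℝ) - ∫ g', (Zcard k g' : ℝ) ∂μ) ^ 2
        = ∑ i, ∑ j, (X i g - m i) * (X j g - m j) := by
      intro g
      rw [hZ g, hEZ, sq, ← Finset.sum_sub_distrib, Finset.sum_mul_sum]
    have hvar : ∫ g, ((Zcard k g : ℝ) - ∫ g', (Zcard k g' : ℝ) ∂μ) ^ 2 ∂μ
        = ∑ i, ∑ j, ∫ g, (X i g - m i) * (X j g - m j) ∂μ := by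
      rw [integral_congr_ae (Filter.Eventually.of_forall hpt),
        integral_finset_sum _ (fun i _ => hInt _)]
      exact Finset.sum_congr rfl fun i _ => integral_finset_sum _ (fun j _ => hInt _)
    rw [hvar, hEZ]
    have step1 : ∑ i, ∑ j, ∫ g, (X i g - m i) * (X j g - m j) ∂μ
        ≤ ∑ i : Fin n, ∑ j : Fin n, (if i = j then m i else 2 * pm) :=
      Finset.sum_le_sum fun i _ => Finset.sum_le_sum fun j _ => hterm i j
    have step2 : ∀ i : Fin n, ∑ j : Fin n, (if i = j then m i else 2 * pm)
        = m i + ((n : ℝ) - 1) * (2 * pm) := by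
      intro i
      have h1 : ∀ j : Fin n, (if i = j then m i else 2 * pm)
          = (if i = j then m i - 2 * pm else 0) + 2 * pm := fun j => by split_ifs <;> ring
      rw [Finset.sum_congr rfl fun j _ => h1 j, Finset.sum_add_distrib, Finset.sum_ite_eq,
        if_pos (Finset.mem_univ i), Finset.sum_const, Finset.card_univ, Fintype.card_fin,
        nsmul_eq_mul]
      ring
    have step3 : ∑ i : Fin n, (m i + ((n : ℝ) - 1) * (2 * pm))
        = (∑ i, m i) + (n : ℝ) * (((n : ℝ) - 1) * (2 * pm)) := by
      rw [Finset.sum_add_distrib, Finset.sum_const, Finset.card_univ, Fintype.card_fin,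
        nsmul_eq_mul]
    have hfinal : (n : ℝ) * (((n : ℝ) - 1) * (2 * pm)) ≤ 3 * (n : ℝ) ^ 2 * pm := by
      have hn0 : (0 : ℝ) ≤ (n : ℝ) := Nat.cast_nonneg n
      nlinarith [mul_nonneg (mul_nonneg hn0 hn0) hpm0, mul_nonneg hn0 hpm0]
    calc ∑ i, ∑ j, ∫ g, (X i g - m i) * (X j g - m j) ∂μ
        ≤ ∑ i : Fin n, ∑ j : Fin n, (if i = j then m i else 2 * pm) := step1
      _ = (∑ i, m i) + (n : ℝ) * (((n : ℝ) - 1) * (2 * pm)) := by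
          rw [Finset.sum_congr rfl fun i _ => step2 i, step3]
      _ ≤ (∑ i, m i) + 3 * (n : ℝ) ^ 2 * pm := by linarith
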